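/- Let G1 and G2 be connected, 2-edge-connected graphs on the same edge set with L(G1) = L(G2), such that L(G1) has at least two circuits and, for each i, every series class of Gi is an ear of Gi. Then a set of edges is the edge set of an ear of G1 if and only if it is the edge set of an ear of G2. -/

import Mathlib

open Finset

/-- A multigraph with vertex type `V`, edge-label type `α`, edge set `E`,
and an endpoints function assigning to each edge an unordered pair of vertices. -/
structure MGraph (V : Type) (α : Type) where
  E : Finset α
  ends : α → Sym2 V

namespace MGraph

variable {V V₁ V₂ : Type} {α : Type} [DecidableEq V] [DecidableEq V₁] [DecidableEq V₂]
  [DecidableEq α]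

/-- `u` and `v` are joined by an edge of `X`. -/
def Adj (G : MGraph V α) (X : Finset α) (u v : V) : Prop :=
  ∃ e ∈ X, G.ends e = s(u, v)

/-- `v` is incident with an edge of `X`. -/
def VIn (G : MGraph V α) (X : Finset α) (v : V) : Prop :=
  ∃ e ∈ X, v ∈ G.ends e

/-- The degree of `v` in the edge set `X` (loops count twice). -/
def degIn (G : MGraph V α) (X : Finset α) (v : V) : ℕ :=
  ∑ e ∈ X, (if G.ends e = s(v, v) then 2 else if v ∈ G.ends e then 1 else 0)

/-- `C` is the edge set of a cycle of `G`: a nonempty connected 2-regular subgraph. -/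
def IsCycle (G : MGraph V α) (C : Finset α) : Prop :=
  C.Nonempty ∧ C ⊆ G.E ∧ (∀ v, G.VIn C v → G.degIn C v = 2) ∧
    ∀ u v, G.VIn C u → G.VIn C v → Relation.ReflTransGen (G.Adj C) u v

/-- The subgraph on edge set `X` contains at least two (distinct) cycles. -/
def TwoCycles (G : MGraph V α) (X : Finset α) : Prop :=
  ∃ C₁ C₂ : Finset α, G.IsCycle C₁ ∧ G.IsCycle C₂ ∧ C₁ ⊆ X ∧ C₂ ⊆ X ∧ C₁ ≠ C₂

/-- `X` is a circuit of the bicircular lift matroid `L(G)`: a minimal edge set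
containing at least two cycles. -/
def LiftCircuit (G : MGraph V α) (X : Finset α) : Prop :=
  X ⊆ G.E ∧ G.TwoCycles X ∧ ∀ Y ⊂ X, ¬ G.TwoCycles Y

/-- `X` is independent in the bicircular lift matroid `L(G)`. -/
def LiftIndep (G : MGraph V α) (X : Finset α) : Prop :=
  X ⊆ G.E ∧ ∀ C ⊆ X, ¬ G.LiftCircuit C

/-- `L(G)` has at least two circuits. -/
def TwoLiftCircuits (G : MGraph V α) : Prop :=
  ∃ X Y : Finset α, G.LiftCircuit X ∧ G.LiftCircuit Y ∧ X ≠ Y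

/-- Equality of the bicircular lift matroids `L(G₁) = L(G₂)` (equal ground sets
and equal circuit collections). -/
def LiftEq (G₁ : MGraph V₁ α) (G₂ : MGraph V₂ α) : Prop :=
  G₁.E = G₂.E ∧ ∀ X : Finset α, G₁.LiftCircuit X ↔ G₂.LiftCircuit X

/-- `G₁` and `G₂` are 2-isomorphic, i.e. their graphic matroids on the common
edge set are equal (equivalently, they have the same cycles). -/
def TwoIso (G₁ : MGraph V₁ α) (G₂ : MGraph V₂ α) : Prop :=
  G₁.E = G₂.E ∧ ∀ X : Finset α, G₁.IsCycle X ↔ G₂.IsCycle X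

/-- `G` has no loops. -/
def Loopless (G : MGraph V α) : Prop := ∀ e ∈ G.E, ¬ (G.ends e).IsDiag

/-- `G` is connected. -/
def Connected (G : MGraph V α) : Prop :=
  ∀ u v : V, Relation.ReflTransGen (G.Adj G.E) u v

/-- `G` is 2-edge-connected: every edge lies in a cycle. -/
def TwoEdgeConnected (G : MGraph V α) : Prop :=
  ∀ e ∈ G.E, ∃ C : Finset α, G.IsCycle C ∧ e ∈ C

/-- `e` is a cut-edge of `G`: an edge contained in no cycle. -/
def IsCutEdge (G : MGraph V α) (e : α) : Prop :=
  e ∈ G.E ∧ ∀ C : Finset α, G.IsCycle C → e ∉ C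

/-- Deletion of the edge `e` from `G`. -/
def delete (G : MGraph V α) (e : α) : MGraph V α :=
  ⟨G.E.erase e, G.ends⟩

/-- Restriction of `G` to the edge set `X`. -/
def restrict (G : MGraph V α) (X : Finset α) : MGraph V α :=
  ⟨G.E ∩ X, G.ends⟩

/-- Contraction of the link `e` with endpoints `u, v`: the edge `e` is deleted
and the vertex `v` is identified with `u`. -/
def contractLink (G : MGraph V α) (e : α) (u v : V) : MGraph V α :=
  ⟨G.E.erase e, fun f => (G.ends f).map (fun w => if w = v then u else w)⟩

/-- `X` is a circuit of the contraction `M/e`, where `M` is the matroid with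
circuit collection `Circ`: the circuits of `M/e` are the minimal nonempty sets of
the form `C \ {e}` with `C` a circuit of `M`. -/
def ContractCircuit (Circ : Finset α → Prop) (e : α) (X : Finset α) : Prop :=
  (X.Nonempty ∧ ∃ C : Finset α, Circ C ∧ X = C.erase e) ∧
    ∀ Y ⊂ X, ¬ (Y.Nonempty ∧ ∃ C : Finset α, Circ C ∧ Y = C.erase e)

/-- `e` and `f` form a series pair: no cycle contains exactly one of them. -/
def SeriesPair (G : MGraph V α) (e f : α) : Prop :=
  e ∈ G.E ∧ f ∈ G.E ∧ ∀ C : Finset α, G.IsCycle C → (e ∈ C ↔ f ∈ C)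

/-- `X` is a series class of `G`: a maximal set of pairwise series edges. -/
def SeriesClass (G : MGraph V α) (X : Finset α) : Prop :=
  X ⊆ G.E ∧ X.Nonempty ∧ (∀ e ∈ X, ∀ f ∈ X, G.SeriesPair e f) ∧
    ∀ g ∈ G.E, (∀ e ∈ X, G.SeriesPair e g) → g ∈ X

/-- `G` is cosimple: no cut-edges and no nontrivial series classes. -/
def CoSimple (G : MGraph V α) : Prop :=
  (∀ e ∈ G.E, ¬ G.IsCutEdge e) ∧
    ∀ e ∈ G.E, ∀ f ∈ G.E, e ≠ f → ¬ G.SeriesPair e f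

/-- `e` and `f` are parallel edges. -/
def Parallel (G : MGraph V α) (e f : α) : Prop :=
  e ≠ f ∧ G.IsCycle {e, f}

/-- `P` is a parallel class of `G`: a maximal set of pairwise parallel non-loop
edges. -/
def ParallelClass (G : MGraph V α) (P : Finset α) : Prop :=
  P ⊆ G.E ∧ P.Nonempty ∧ (∀ e ∈ P, ¬ (G.ends e).IsDiag) ∧
    (∀ e ∈ P, ∀ f ∈ P, e ≠ f → G.Parallel e f) ∧
    ∀ g ∈ G.E, g ∉ P → ¬ (G.ends g).IsDiag → ∃ e ∈ P, ¬ G.Parallel e g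

/-- `P` is the edge set of a path of `G`: nonempty, acyclic, connected, with all
degrees at most two. -/
def IsPath (G : MGraph V α) (P : Finset α) : Prop :=
  P.Nonempty ∧ P ⊆ G.E ∧ (∀ C ⊆ P, ¬ G.IsCycle C) ∧
    (∀ v, G.VIn P v → G.degIn P v ≤ 2) ∧
    ∀ u v, G.VIn P u → G.VIn P v → Relation.ReflTransGen (G.Adj P) u v

/-- `P` is the edge set of a path of `G` with end-vertices `x` and `y`. -/
def PathBetween (G : MGraph V α) (P : Finset α) (x y : V) : Prop :=
  G.IsPath P ∧ x ≠ y ∧ G.degIn P x = 1 ∧ G.degIn P y = 1 ∧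
    ∀ v, G.degIn P v = 1 → v = x ∨ v = y

/-- `P` is the edge set of an ear of `G`: a path contained in a cycle, whose
internal vertices have degree two in `G` and whose end-vertices have degree at
least three in `G`. -/
def IsEar (G : MGraph V α) (P : Finset α) : Prop :=
  G.IsPath P ∧ (∀ v, G.degIn P v = 2 → G.degIn G.E v = 2) ∧
    (∀ v, G.degIn P v = 1 → 3 ≤ G.degIn G.E v) ∧
    ∃ C : Finset α, G.IsCycle C ∧ P ⊆ C

/-- `G` is a subdivision of `K_2^n`: two distinct branch vertices joined by `n`
internally disjoint paths whose edge sets partition `E(G)`. -/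
def IsK2nSub (G : MGraph V α) (n : ℕ) : Prop :=
  ∃ x y : V, x ≠ y ∧ ∃ P : Fin n → Finset α,
    (G.E = Finset.univ.biUnion fun i => P i) ∧
    (∀ i j : Fin n, i ≠ j → Disjoint (P i) (P j)) ∧
    (∀ i : Fin n, G.PathBetween (P i) x y) ∧
    (∀ i j : Fin n, i ≠ j → ∀ v, G.VIn (P i) v → G.VIn (P j) v → v = x ∨ v = y)

/-- `G` is a subdivision of `K_2^n` with the edge `e` lying on one of the `n`
paths. -/
def IsK2nSubThrough (G : MGraph V α) (n : ℕ) (e : α) : Prop :=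
  ∃ x y : V, x ≠ y ∧ ∃ P : Fin n → Finset α,
    (G.E = Finset.univ.biUnion fun i => P i) ∧
    (∀ i j : Fin n, i ≠ j → Disjoint (P i) (P j)) ∧
    (∀ i : Fin n, G.PathBetween (P i) x y) ∧
    (∀ i j : Fin n, i ≠ j → ∀ v, G.VIn (P i) v → G.VIn (P j) v → v = x ∨ v = y) ∧
    ∃ i : Fin n, e ∈ P i

/-- `T` is the edge set of a spanning tree of `G`. -/
def IsSpanningTree (G : MGraph V α) (T : Finset α) : Prop :=
  T ⊆ G.E ∧ (∀ C ⊆ T, ¬ G.IsCycle C) ∧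
    ∀ u v : V, Relation.ReflTransGen (G.Adj T) u v

end MGraph


namespace MGraph
variable {V V₁ V₂ : Type} {α : Type} [DecidableEq V] [DecidableEq V₁] [DecidableEq V₂]
  [DecidableEq α]

set_option linter.unusedSectionVars false

/-- the contribution of a single edge to a degree -/
def cdeg (G : MGraph V α) (e : α) (v : V) : ℕ :=
  if G.ends e = s(v, v) then 2 else if v ∈ G.ends e then 1 else 0

lemma degIn_eq_sum (G : MGraph V α) (X : Finset α) (v : V) :
    G.degIn X v = ∑ e ∈ X, G.cdeg e v := rfl

lemma cdeg_pos (G : MGraph V α) {e : α} {v : V} (h : v ∈ G.ends e) : 1 ≤ G.cdeg e v := by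
  unfold cdeg; split <;> simp [h]

lemma mem_of_cdeg_pos (G : MGraph V α) {e : α} {v : V} (h : 1 ≤ G.cdeg e v) : v ∈ G.ends e := by
  unfold cdeg at h; split at h
  · rename_i h2; rw [h2]; exact Sym2.mem_mk_left v v
  · split at h
    · assumption
    · omega

lemma cdeg_eq_one (G : MGraph V α) {e : α} {v : V} (h : v ∈ G.ends e)
    (hd : ¬ (G.ends e).IsDiag) : G.cdeg e v = 1 := by
  unfold cdeg
  rw [if_neg, if_pos h]
  intro h2; rw [h2] at hd; exact hd (Sym2.mk_isDiag_iff.2 rfl)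

lemma degIn_add_sdiff (G : MGraph V α) {P S : Finset α} (h : P ⊆ S) (v : V) :
    G.degIn S v = G.degIn P v + G.degIn (S \ P) v := by
  rw [degIn_eq_sum, degIn_eq_sum, degIn_eq_sum, add_comm, Finset.sum_sdiff h]

lemma degIn_eq_zero_iff (G : MGraph V α) (X : Finset α) (v : V) :
    G.degIn X v = 0 ↔ ∀ e ∈ X, v ∉ G.ends e := by
  rw [degIn_eq_sum, Finset.sum_eq_zero_iff]
  constructor
  · intro h e he hv
    have := G.cdeg_pos hv
    have := h e he
    omega
  · intro h e he
    have : ¬ (1 ≤ G.cdeg e v) := fun hh => h e he (G.mem_of_cdeg_pos hh)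
    omega

lemma degIn_pos_of_vin (G : MGraph V α) {X : Finset α} {v : V} (h : G.VIn X v) :
    1 ≤ G.degIn X v := by
  obtain ⟨e, he, hv⟩ := h
  rw [degIn_eq_sum]
  calc 1 ≤ G.cdeg e v := G.cdeg_pos hv
  _ ≤ _ := Finset.single_le_sum (f := fun e => G.cdeg e v) (fun i _ => Nat.zero_le _) he

lemma vin_of_degIn_pos (G : MGraph V α) {X : Finset α} {v : V} (h : 1 ≤ G.degIn X v) :
    G.VIn X v := by
  by_contra hc
  have : G.degIn X v = 0 := (G.degIn_eq_zero_iff X v).2 (fun e he hv => hc ⟨e, he, hv⟩)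
  omega

lemma degIn_union_inter (G : MGraph V α) (A B : Finset α) (v : V) :
    G.degIn (A ∪ B) v + G.degIn (A ∩ B) v = G.degIn A v + G.degIn B v := by
  simp only [degIn_eq_sum]
  exact Finset.sum_union_inter

lemma degIn_symmDiff_even (G : MGraph V α) {A B : Finset α} (v : V)
    (hA : Even (G.degIn A v)) (hB : Even (G.degIn B v)) :
    Even (G.degIn (symmDiff A B) v) := by
  have h1 : symmDiff A B = (A ∪ B) \ (A ∩ B) := by
    ext x; simp [symmDiff_def]; tauto
  have h2 := G.degIn_add_sdiff (show A ∩ B ⊆ A ∪ B from Finset.inter_subset_union) v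
  have h3 := G.degIn_union_inter A B v
  rw [h1]
  obtain ⟨a, ha⟩ := hA; obtain ⟨b, hb⟩ := hB
  refine ⟨a + b - G.degIn (A ∩ B) v, by omega⟩

lemma adj_symm (G : MGraph V α) (X : Finset α) : Symmetric (G.Adj X) := by
  intro u v ⟨e, he, hev⟩
  exact ⟨e, he, by rw [hev, Sym2.eq_swap]⟩

lemma rtg_adj_symm (G : MGraph V α) (X : Finset α) {u v : V}
    (h : Relation.ReflTransGen (G.Adj X) u v) : Relation.ReflTransGen (G.Adj X) v u :=
  by
    induction h with
    | refl => exact Relation.ReflTransGen.refl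
    | tail _ hab ih => exact Relation.ReflTransGen.head (G.adj_symm X hab) ih

lemma vin_mono (G : MGraph V α) {X Y : Finset α} (h : X ⊆ Y) {v : V} (hv : G.VIn X v) :
    G.VIn Y v := by
  obtain ⟨e, he, hev⟩ := hv; exact ⟨e, h he, hev⟩

lemma exists_mem_ends (G : MGraph V α) (e : α) : ∃ v, v ∈ G.ends e := by
  induction G.ends e using Sym2.ind with
  | _ x y => exact ⟨x, Sym2.mem_mk_left x y⟩

/-- Boundary lemma: if `P ⊆ S`, `P` is nonempty, `S \ P` is nonempty, and the vertices of
`S` are mutually connected in `S`, then some vertex of `P` is incident with an edge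
of `S \ P`. -/
lemma exists_boundary (G : MGraph V α) {P S : Finset α} (hPS : P ⊆ S) (hP : P.Nonempty)
    (hSP : (S \ P).Nonempty)
    (hconn : ∀ u v, G.VIn S u → G.VIn S v → Relation.ReflTransGen (G.Adj S) u v) :
    ∃ w g, G.VIn P w ∧ g ∈ S ∧ g ∉ P ∧ w ∈ G.ends g := by
  obtain ⟨e₀, he₀⟩ := hP
  obtain ⟨u₀, hu₀⟩ := G.exists_mem_ends e₀
  obtain ⟨g₀, hg₀⟩ := hSP
  rw [Finset.mem_sdiff] at hg₀
  obtain ⟨v₀, hv₀⟩ := G.exists_mem_ends g₀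
  have hrtg := hconn u₀ v₀ ⟨e₀, hPS he₀, hu₀⟩ ⟨g₀, hg₀.1, hv₀⟩
  have key : ∀ v, Relation.ReflTransGen (G.Adj S) u₀ v →
      (∃ w g, G.VIn P w ∧ g ∈ S ∧ g ∉ P ∧ w ∈ G.ends g) ∨ G.VIn P v := by
    intro v h
    induction h with
    | refl => exact Or.inr ⟨e₀, he₀, hu₀⟩
    | tail h1 h2 ih =>
      rcases ih with h | h
      · exact Or.inl h
      · obtain ⟨g, hgS, hg⟩ := h2
        by_cases hgP : g ∈ P
        · exact Or.inr ⟨g, hgP, by rw [hg]; exact Sym2.mem_mk_right _ _⟩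
        · exact Or.inl ⟨_, g, h, hgS, hgP, by rw [hg]; exact Sym2.mem_mk_left _ _⟩
  rcases key v₀ hrtg with h | h
  · exact h
  · exact ⟨v₀, g₀, h, hg₀.1, hg₀.2, hv₀⟩

/-- A cycle contained in a cycle is equal to it. -/
lemma cycle_subset_cycle (G : MGraph V α) {A B : Finset α} (hA : G.IsCycle A)
    (hB : G.IsCycle B) (h : B ⊆ A) : B = A := by
  by_contra hne
  have hSP : (A \ B).Nonempty := by
    rw [Finset.sdiff_nonempty]; intro h2; exact hne (Finset.Subset.antisymm h h2)
  obtain ⟨w, g, hwP, hgS, hgP, hwg⟩ := G.exists_boundary h hB.1 hSP hA.2.2.2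
  have h1 : G.degIn B w = 2 := hB.2.2.1 w hwP
  have h2 : G.degIn A w = 2 := hA.2.2.1 w (G.vin_mono h hwP)
  have h3 := G.degIn_add_sdiff h w
  have h4 : 1 ≤ G.degIn (A \ B) w := G.degIn_pos_of_vin ⟨g, Finset.mem_sdiff.2 ⟨hgS, hgP⟩, hwg⟩
  omega

/-- A loop forms a cycle. -/
lemma loop_cycle (G : MGraph V α) {e : α} (he : e ∈ G.E) (hd : (G.ends e).IsDiag) :
    G.IsCycle {e} := by
  obtain ⟨v, hv⟩ : ∃ v, G.ends e = s(v, v) := by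
    obtain ⟨z, hz⟩ : ∃ z, z = G.ends e := ⟨_, rfl⟩
    induction z using Sym2.ind with
    | _ x y =>
      rw [← hz, Sym2.mk_isDiag_iff] at hd
      exact ⟨x, by rw [← hz, hd]⟩
  have hmem : ∀ u, u ∈ G.ends e → u = v := by
    intro u hu; rw [hv, Sym2.mem_iff] at hu; tauto
  refine ⟨⟨e, Finset.mem_singleton_self e⟩, by simpa using he, ?_, ?_⟩
  · intro u ⟨f, hf, huf⟩
    rw [Finset.mem_singleton] at hf; subst hf
    have := hmem u huf; subst this
    rw [degIn_eq_sum, Finset.sum_singleton, cdeg, if_pos hv]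
  · intro u w ⟨f, hf, huf⟩ ⟨f2, hf2, hwf⟩
    rw [Finset.mem_singleton] at hf hf2; subst hf; subst hf2
    rw [hmem u huf, hmem w hwf]

/-- Paths contain no loops. -/
lemma path_no_loops (G : MGraph V α) {P : Finset α} (hP : G.IsPath P) :
    ∀ e ∈ P, ¬ (G.ends e).IsDiag := by
  intro e he hd
  exact hP.2.2.1 {e} (Finset.singleton_subset_iff.2 he) (G.loop_cycle (hP.2.1 he) hd)

/-- Every vertex of a cycle has even degree (in the cycle). -/
lemma cycle_even (G : MGraph V α) {C : Finset α} (hC : G.IsCycle C) (v : V) :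
    Even (G.degIn C v) := by
  by_cases h : G.VIn C v
  · rw [hC.2.2.1 v h]; exact ⟨1, rfl⟩
  · have : G.degIn C v = 0 := by
      rw [degIn_eq_zero_iff]; intro e he hv; exact h ⟨e, he, hv⟩
    rw [this]; exact ⟨0, rfl⟩

lemma degIn_eq_card_filter (G : MGraph V α) {X : Finset α}
    (hX : ∀ e ∈ X, ¬ (G.ends e).IsDiag) (x : V) :
    G.degIn X x = (X.filter (fun e => x ∈ G.ends e)).card := by
  classical
  rw [degIn_eq_sum]
  rw [Finset.card_filter]
  refine Finset.sum_congr rfl ?_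
  intro e he
  by_cases hm : x ∈ G.ends e
  · rw [if_pos hm, G.cdeg_eq_one hm (hX e he)]
  · rw [if_neg hm]
    unfold cdeg
    rw [if_neg, if_neg hm]
    intro h2
    exact hm (by rw [h2]; exact Sym2.mem_mk_left x x)

lemma walk_aux (G : MGraph V α) {T : Finset α} (hTE : T ⊆ G.E)
    (hnl : ∀ e ∈ T, ¬ (G.ends e).IsDiag)
    (hdeg : ∀ x, G.VIn T x → 2 ≤ G.degIn T x) :
    ∀ n k : ℕ, T.card - k = n → ∀ (v : ℕ → V) (e : ℕ → α),
    (∀ i₁, i₁ ≤ k+1 → ∀ i₂, i₂ ≤ k+1 → v i₁ = v i₂ → i₁ = i₂) →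
    (∀ i, i ≤ k → e i ∈ T) →
    (∀ i, i ≤ k → G.ends (e i) = s(v i, v (i+1))) →
    ∃ Z ⊆ T, G.IsCycle Z := by
  classical
  intro n
  induction n using Nat.strong_induction_on with
  | _ n IH =>
  intro k hkn v e hv heT hends
  -- edge injectivity
  have he_inj : ∀ i₁, i₁ ≤ k → ∀ i₂, i₂ ≤ k → e i₁ = e i₂ → i₁ = i₂ := by
    intro i₁ h₁ i₂ h₂ hee
    have h3 : s(v i₁, v (i₁+1)) = s(v i₂, v (i₂+1)) := by
      rw [← hends i₁ h₁, ← hends i₂ h₂, hee]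
    rw [Sym2.eq_iff] at h3
    rcases h3 with ⟨ha, _⟩ | ⟨ha, hb⟩
    · exact hv i₁ (by omega) i₂ (by omega) ha
    · have := hv i₁ (by omega) (i₂+1) (by omega) ha
      have := hv (i₁+1) (by omega) i₂ (by omega) hb
      omega
  -- find a new edge e' at u := v (k+1)
  set u := v (k+1) with hu
  have huin : u ∈ G.ends (e k) := by rw [hends k le_rfl]; exact Sym2.mem_mk_right _ _
  have hdu : 2 ≤ G.degIn T u := hdeg u ⟨e k, heT k le_rfl, huin⟩
  have hsplit := G.degIn_add_sdiff (Finset.singleton_subset_iff.2 (heT k le_rfl)) u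
  have hone : G.degIn {e k} u = 1 := by
    rw [degIn_eq_sum, Finset.sum_singleton]
    exact G.cdeg_eq_one huin (hnl _ (heT k le_rfl))
  have : 1 ≤ G.degIn (T \ {e k}) u := by omega
  obtain ⟨e', he'mem, hue'⟩ := G.vin_of_degIn_pos this
  rw [Finset.mem_sdiff, Finset.mem_singleton] at he'mem
  obtain ⟨he'T, he'ne⟩ := he'mem
  obtain ⟨w, hw⟩ : ∃ w, G.ends e' = s(u, w) := Sym2.mem_iff_exists.1 hue'
  have hwu : w ≠ u := by
    intro h2; apply hnl e' he'T; rw [hw, h2]; exact Sym2.mk_isDiag_iff.2 rfl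
  -- e' is fresh
  have hfresh : ∀ m, m ≤ k → e' ≠ e m := by
    intro m hm heq
    have : u ∈ G.ends (e m) := by rw [← heq]; exact hue'
    rw [hends m hm, Sym2.mem_iff] at this
    rcases this with h2 | h2
    · have := hv (k+1) (by omega) m (by omega) h2; omega
    · have := hv (k+1) (by omega) (m+1) (by omega) h2
      have : m = k := by omega
      exact he'ne (by rw [heq, this])
  by_cases hrep : ∃ j, j ≤ k + 1 ∧ w = v j
  · -- found a repeat: extract the cycle
    obtain ⟨j, hj, hwj⟩ := hrep
    have hjk : j ≤ k := by
      rcases Nat.lt_or_ge j (k+1) with h2 | h2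
      · omega
      · exfalso; exact hwu (by rw [hwj]; congr 1; omega)
    set Z := (Finset.Icc j k).image e ∪ {e'} with hZdef
    have he'Z : e' ∈ Z := Finset.mem_union_right _ (Finset.mem_singleton_self e')
    have hemZ : ∀ m, j ≤ m → m ≤ k → e m ∈ Z := by
      intro m h1 h2
      exact Finset.mem_union_left _ (Finset.mem_image_of_mem e (Finset.mem_Icc.2 ⟨h1, h2⟩))
    have hZT : Z ⊆ T := by
      intro z hz
      rcases Finset.mem_union.1 hz with h2 | h2
      · obtain ⟨m, hm, rfl⟩ := Finset.mem_image.1 h2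
        exact heT m (Finset.mem_Icc.1 hm).2
      · rw [Finset.mem_singleton.1 h2]; exact he'T
    have hZnl : ∀ z ∈ Z, ¬ (G.ends z).IsDiag := fun z hz => hnl z (hZT hz)
    have hidx : ∀ y, G.VIn Z y → ∃ i, j ≤ i ∧ i ≤ k+1 ∧ y = v i := by
      intro y hy
      obtain ⟨z, hz, hyz⟩ := hy
      rcases Finset.mem_union.1 hz with h2 | h2
      · obtain ⟨m, hm, rfl⟩ := Finset.mem_image.1 h2
        obtain ⟨hm1, hm2⟩ := Finset.mem_Icc.1 hm
        rw [hends m hm2, Sym2.mem_iff] at hyz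
        rcases hyz with rfl | rfl
        · exact ⟨m, hm1, by omega, rfl⟩
        · exact ⟨m+1, by omega, by omega, rfl⟩
      · rw [Finset.mem_singleton.1 h2] at hyz
        rw [hw, Sym2.mem_iff] at hyz
        rcases hyz with rfl | rfl
        · exact ⟨k+1, by omega, le_rfl, hu⟩
        · exact ⟨j, le_rfl, by omega, hwj⟩
    refine ⟨Z, hZT, ?_, fun z hz => hTE (hZT hz), ?_, ?_⟩
    · exact ⟨e', he'Z⟩
    · -- degrees
      intro x hx
      obtain ⟨i, hij, hik, rfl⟩ := hidx x hx
      have hmem_em : ∀ m, j ≤ m → m ≤ k → (v i ∈ G.ends (e m) ↔ i = m ∨ i = m + 1) := by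
        intro m hm1 hm2
        rw [hends m hm2, Sym2.mem_iff]
        constructor
        · rintro (h2 | h2)
          · exact Or.inl (hv i (by omega) m (by omega) h2)
          · exact Or.inr (hv i (by omega) (m+1) (by omega) h2)
        · rintro (rfl | rfl)
          · exact Or.inl rfl
          · exact Or.inr rfl
      have hmem_e' : v i ∈ G.ends e' ↔ i = k + 1 ∨ i = j := by
        rw [hw, Sym2.mem_iff, hu, hwj]
        constructor
        · rintro (h2 | h2)
          · exact Or.inl (hv i (by omega) (k+1) (by omega) h2)
          · exact Or.inr (hv i (by omega) j (by omega) h2)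
        · rintro (rfl | rfl)
          · exact Or.inl rfl
          · exact Or.inr rfl
      rw [G.degIn_eq_card_filter hZnl]
      have hpair : Z.filter (fun z => v i ∈ G.ends z) =
          {if i = j then e' else e (i-1), if i = k+1 then e' else e i} := by
        ext z
        simp only [Finset.mem_filter, Finset.mem_insert, Finset.mem_singleton]
        constructor
        · rintro ⟨hz, hmem⟩
          rcases Finset.mem_union.1 hz with h2 | h2
          · obtain ⟨m, hm, rfl⟩ := Finset.mem_image.1 h2
            obtain ⟨hm1, hm2⟩ := Finset.mem_Icc.1 hm
            rcases (hmem_em m hm1 hm2).1 hmem with rfl | rfl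
            · right; rw [if_neg (by omega)]
            · left; rw [if_neg (by omega)]
              norm_num
          · rw [Finset.mem_singleton.1 h2]
            rcases hmem_e'.1 (by rw [← Finset.mem_singleton.1 h2]; exact hmem) with h3 | h3
            · right; rw [if_pos h3]
            · left; rw [if_pos h3]
        · rintro (rfl | rfl)
          · by_cases hc : i = j
            · rw [if_pos hc]
              exact ⟨he'Z, hmem_e'.2 (Or.inr hc)⟩
            · rw [if_neg hc]
              refine ⟨hemZ (i-1) (by omega) (by omega), ?_⟩
              exact (hmem_em (i-1) (by omega) (by omega)).2 (Or.inr (by omega))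
          · by_cases hc : i = k+1
            · rw [if_pos hc]
              exact ⟨he'Z, hmem_e'.2 (Or.inl hc)⟩
            · rw [if_neg hc]
              refine ⟨hemZ i (by omega) (by omega), ?_⟩
              exact (hmem_em i (by omega) (by omega)).2 (Or.inl rfl)
      rw [hpair, Finset.card_insert_of_notMem, Finset.card_singleton]
      rw [Finset.mem_singleton]
      by_cases hc : i = j <;> by_cases hc2 : i = k+1
      · omega
      · rw [if_pos hc, if_neg hc2]
        exact hfresh i (by omega)
      · rw [if_neg hc, if_pos hc2]
        intro h3
        exact hfresh (i-1) (by omega) h3.symm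
      · rw [if_neg hc, if_neg hc2]
        intro h3
        have := he_inj (i-1) (by omega) i (by omega) h3
        omega
    · -- connectivity
      have hchain : ∀ i, j ≤ i → i ≤ k+1 → Relation.ReflTransGen (G.Adj Z) (v j) (v i) := by
        intro i hij
        induction i, hij using Nat.le_induction with
        | base => intro _; exact Relation.ReflTransGen.refl
        | succ i hij ih =>
          intro hik
          exact (ih (by omega)).tail ⟨e i, hemZ i hij (by omega), hends i (by omega)⟩
      intro x y hx hy
      obtain ⟨i₁, h1, h2, rfl⟩ := hidx x hx
      obtain ⟨i₂, h3, h4, rfl⟩ := hidx y hy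
      exact (G.rtg_adj_symm Z (hchain i₁ h1 h2)).trans (hchain i₂ h3 h4)
  · -- extend the walk
    push_neg at hrep
    have hcard : k + 2 ≤ T.card := by
      have hsub : (Finset.range (k+1)).image e ∪ {e'} ⊆ T := by
        intro z hz
        rcases Finset.mem_union.1 hz with h2 | h2
        · obtain ⟨m, hm, rfl⟩ := Finset.mem_image.1 h2
          exact heT m (Nat.lt_succ_iff.1 (Finset.mem_range.1 hm))
        · rw [Finset.mem_singleton.1 h2]; exact he'T
      have hcard1 : ((Finset.range (k+1)).image e).card = k + 1 := by
        rw [Finset.card_image_of_injOn, Finset.card_range]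
        intro i₁ h₁ i₂ h₂ hee
        exact he_inj i₁ (Nat.lt_succ_iff.1 (Finset.mem_range.1 h₁)) i₂
          (Nat.lt_succ_iff.1 (Finset.mem_range.1 h₂)) hee
      have hnotmem : e' ∉ (Finset.range (k+1)).image e := by
        intro h2
        obtain ⟨m, hm, hme⟩ := Finset.mem_image.1 h2
        exact hfresh m (Nat.lt_succ_iff.1 (Finset.mem_range.1 hm)) hme.symm
      have := Finset.card_le_card hsub
      rw [Finset.card_union_of_disjoint (by simpa using hnotmem), hcard1,
        Finset.card_singleton] at this
      omega
    refine IH (T.card - (k+1)) (by omega) (k+1) rfl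
      (Function.update v (k+2) w) (Function.update e (k+1) e') ?_ ?_ ?_
    · intro i₁ h₁ i₂ h₂ hvv
      by_cases hc₁ : i₁ = k + 2 <;> by_cases hc₂ : i₂ = k + 2
      · omega
      · exfalso
        rw [hc₁, Function.update_self, Function.update_of_ne (by omega)] at hvv
        exact hrep i₂ (by omega) hvv
      · exfalso
        rw [hc₂, Function.update_self, Function.update_of_ne (by omega)] at hvv
        exact hrep i₁ (by omega) hvv.symm
      · rw [Function.update_of_ne hc₁, Function.update_of_ne hc₂] at hvv
        exact hv i₁ (by omega) i₂ (by omega) hvv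
    · intro i hi
      by_cases hc : i = k + 1
      · rw [hc, Function.update_self]; exact he'T
      · rw [Function.update_of_ne hc]; exact heT i (by omega)
    · intro i hi
      by_cases hc : i = k + 1
      · subst hc
        rw [Function.update_self, Function.update_of_ne (by omega),
          Function.update_self]
        exact hw
      · rw [Function.update_of_ne hc, Function.update_of_ne (by omega),
          Function.update_of_ne (by omega)]
        exact hends i (by omega)

lemma exists_cycle_of_even (G : MGraph V α) {T : Finset α} (hTE : T ⊆ G.E)
    (hne : T.Nonempty) (heven : ∀ x, Even (G.degIn T x)) :
    ∃ Z ⊆ T, G.IsCycle Z := by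
  classical
  by_cases hl : ∃ e ∈ T, (G.ends e).IsDiag
  · obtain ⟨e, heT, hd⟩ := hl
    exact ⟨{e}, Finset.singleton_subset_iff.2 heT, G.loop_cycle (hTE heT) hd⟩
  · push_neg at hl
    have hdeg : ∀ x, G.VIn T x → 2 ≤ G.degIn T x := by
      intro x hx
      have h1 := G.degIn_pos_of_vin hx
      obtain ⟨m, hm⟩ := heven x
      omega
    obtain ⟨a, ha⟩ := hne
    obtain ⟨x, y, hxy⟩ : ∃ x y, G.ends a = s(x, y) := by
      obtain ⟨z, hz⟩ : ∃ z, z = G.ends a := ⟨_, rfl⟩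
      induction z using Sym2.ind with
      | _ x y => exact ⟨x, y, hz.symm⟩
    have hne2 : x ≠ y := by
      intro h; exact hl a ha (by rw [hxy, h]; exact Sym2.mk_isDiag_iff.2 rfl)
    refine G.walk_aux hTE hl hdeg (T.card - 0) 0 rfl
      (fun i => if i = 0 then x else y) (fun _ => a) ?_ (fun i _ => ha) ?_
    · intro i₁ h₁ i₂ h₂ hv
      interval_cases i₁ <;> interval_cases i₂ <;> simp_all
    · intro i hi
      interval_cases i
      simpa using hxy

lemma liftCircuit_subset_union (G : MGraph V α) {X C₁ C₂ : Finset α} (hX : G.LiftCircuit X)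
    (h1 : G.IsCycle C₁) (h2 : G.IsCycle C₂) (hne : C₁ ≠ C₂) (hs1 : C₁ ⊆ X) (hs2 : C₂ ⊆ X) :
    X = C₁ ∪ C₂ := by
  refine Finset.Subset.antisymm ?_ (Finset.union_subset hs1 hs2)
  intro g hg
  by_contra hgc
  rw [Finset.mem_union] at hgc; push_neg at hgc
  refine hX.2.2 (X.erase g) (Finset.erase_ssubset hg) ⟨C₁, C₂, h1, h2, ?_, ?_, hne⟩
  · intro z hz; exact Finset.mem_erase.2 ⟨fun h => hgc.1 (h ▸ hz), hs1 hz⟩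
  · intro z hz; exact Finset.mem_erase.2 ⟨fun h => hgc.2 (h ▸ hz), hs2 hz⟩

lemma liftCircuit_structure (G : MGraph V α) {X : Finset α} (hX : G.LiftCircuit X) :
    ∃ A B, G.IsCycle A ∧ G.IsCycle B ∧ A ≠ B ∧ A ⊆ X ∧ B ⊆ X ∧ X = A ∪ B := by
  obtain ⟨A, B, hA, hB, hAX, hBX, hne⟩ := hX.2.1
  exact ⟨A, B, hA, hB, hne, hAX, hBX, G.liftCircuit_subset_union hX hA hB hne hAX hBX⟩

lemma exists_liftCircuit_subset (G : MGraph V α) {S : Finset α} (hSE : S ⊆ G.E)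
    (hS : G.TwoCycles S) : ∃ X ⊆ S, G.LiftCircuit X := by
  classical
  have hne : (S.powerset.filter (fun Y => G.TwoCycles Y)).Nonempty :=
    ⟨S, Finset.mem_filter.2 ⟨Finset.mem_powerset_self S, hS⟩⟩
  obtain ⟨X, hX𝒮, hmin⟩ := Finset.exists_min_image _ Finset.card hne
  rw [Finset.mem_filter, Finset.mem_powerset] at hX𝒮
  refine ⟨X, hX𝒮.1, hX𝒮.1.trans hSE, hX𝒮.2, ?_⟩
  intro Y hY hYtc
  have hmem : Y ∈ S.powerset.filter (fun Y => G.TwoCycles Y) :=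
    Finset.mem_filter.2 ⟨Finset.mem_powerset.2 (hY.1.trans hX𝒮.1), hYtc⟩
  have h3 := hmin Y hmem
  have h4 := Finset.card_lt_card hY
  omega

lemma seriesPair_liftSeries (G : MGraph V α) {e f : α} (h : G.SeriesPair e f) :
    ∀ X, G.LiftCircuit X → (e ∈ X ↔ f ∈ X) := by
  intro X hX
  obtain ⟨A, B, hA, hB, hne, hAX, hBX, hXU⟩ := G.liftCircuit_structure hX
  subst hXU
  simp only [Finset.mem_union]
  constructor
  · rintro (h2 | h2)
    · exact Or.inl ((h.2.2 A hA).1 h2)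
    · exact Or.inr ((h.2.2 B hB).1 h2)
  · rintro (h2 | h2)
    · exact Or.inl ((h.2.2 A hA).2 h2)
    · exact Or.inr ((h.2.2 B hB).2 h2)

lemma finset_symmDiff_nonempty {A B : Finset α} (h : A ≠ B) : (symmDiff A B).Nonempty := by
  rw [Finset.nonempty_iff_ne_empty]
  intro h2
  apply h
  have : symmDiff A B = ⊥ := by rw [h2]; rfl
  exact symmDiff_eq_bot.1 this

lemma symmDiff_subset_union' {A B : Finset α} : symmDiff A B ⊆ A ∪ B := by
  intro t ht
  rw [Finset.mem_union]
  rcases Finset.mem_symmDiff.1 ht with h | h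
  exacts [Or.inl h.1, Or.inr h.1]

lemma exists_cycle_symmDiff (G : MGraph V α) {A B : Finset α} (hA : G.IsCycle A)
    (hB : G.IsCycle B) (hne : A ≠ B) : ∃ Z ⊆ symmDiff A B, G.IsCycle Z := by
  refine G.exists_cycle_of_even ?_ (finset_symmDiff_nonempty hne) ?_
  · intro z hz
    rcases Finset.mem_union.1 (symmDiff_subset_union' hz) with h | h
    exacts [hA.2.1 h, hB.2.1 h]
  · intro x; exact G.degIn_symmDiff_even x (G.cycle_even hA x) (G.cycle_even hB x)

/-- There is a lift circuit through any edge that lies on a cycle, provided another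
cycle exists. -/
lemma exists_liftCircuit_mem (G : MGraph V α) :
    ∀ n : ℕ, ∀ {A B : Finset α} {e : α}, (A ∪ B).card ≤ n → G.IsCycle A → G.IsCycle B →
    A ≠ B → e ∈ A → ∃ X, G.LiftCircuit X ∧ X ⊆ A ∪ B ∧ e ∈ X := by
  intro n
  induction n with
  | zero =>
    intro A B e hc hA hB hne he
    exfalso
    obtain ⟨a, ha⟩ := hA.1
    have h2 : a ∈ A ∪ B := Finset.mem_union_left _ ha
    have := Finset.card_pos.2 ⟨a, h2⟩
    omega
  | succ n IH =>
    intro A B e hcard hA hB hne heA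
    by_cases hmin : ∀ Y ⊂ A ∪ B, ¬ G.TwoCycles Y
    · exact ⟨A ∪ B, ⟨Finset.union_subset hA.2.1 hB.2.1,
        ⟨A, B, hA, hB, Finset.subset_union_left, Finset.subset_union_right, hne⟩, hmin⟩,
        Finset.Subset.refl _, Finset.mem_union_left _ heA⟩
    · push_neg at hmin
      obtain ⟨Y, hYsub, hYtc⟩ := hmin
      obtain ⟨A', B', hA', hB', hA'Y, hB'Y, hne'⟩ := hYtc
      have hYAB : Y ⊆ A ∪ B := hYsub.1
      have hYcard : Y.card < (A ∪ B).card := Finset.card_lt_card hYsub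
      by_cases heAB : e ∈ A' ∪ B'
      · rcases Finset.mem_union.1 heAB with h2 | h2
        · have hle : (A' ∪ B').card ≤ n := by
            have := Finset.card_le_card (Finset.union_subset hA'Y hB'Y)
            omega
          obtain ⟨X, hX1, hX2, hX3⟩ := IH hle hA' hB' hne' h2
          exact ⟨X, hX1, hX2.trans ((Finset.union_subset hA'Y hB'Y).trans hYAB), hX3⟩
        · have hle : (B' ∪ A').card ≤ n := by
            have h3 : B' ∪ A' ⊆ Y := Finset.union_subset hB'Y hA'Y
            have := Finset.card_le_card h3
            omega
          obtain ⟨X, hX1, hX2, hX3⟩ := IH hle hB' hA' hne'.symm h2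
          exact ⟨X, hX1, hX2.trans ((Finset.union_subset hB'Y hA'Y).trans hYAB), hX3⟩
      · have hA'A : A' ≠ A := fun h => heAB (Finset.mem_union_left _ (h ▸ heA))
        have hB'A : B' ≠ A := fun h => heAB (Finset.mem_union_right _ (h ▸ heA))
        by_cases hpa : A ∪ A' = A ∪ B
        · by_cases hpb : A ∪ B' = A ∪ B
          · exfalso
            have h1 : B \ A ⊆ A' := by
              intro t ht
              rw [Finset.mem_sdiff] at ht
              have : t ∈ A ∪ A' := by rw [hpa]; exact Finset.mem_union_right _ ht.1
              rcases Finset.mem_union.1 this with h3 | h3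
              · exact absurd h3 ht.2
              · exact h3
            have h2 : B \ A ⊆ B' := by
              intro t ht
              rw [Finset.mem_sdiff] at ht
              have : t ∈ A ∪ B' := by rw [hpb]; exact Finset.mem_union_right _ ht.1
              rcases Finset.mem_union.1 this with h3 | h3
              · exact absurd h3 ht.2
              · exact h3
            have hΔsub : symmDiff A' B' ⊆ A := by
              intro t ht
              have htu : t ∈ A ∪ B := hYAB ((Finset.union_subset hA'Y hB'Y)
                (symmDiff_subset_union' ht))
              rcases Finset.mem_union.1 htu with h3 | h3
              · exact h3
              · by_cases h4 : t ∈ A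
                · exact h4
                · exfalso
                  have h5 : t ∈ B \ A := Finset.mem_sdiff.2 ⟨h3, h4⟩
                  rcases Finset.mem_symmDiff.1 ht with h6 | h6
                  · exact h6.2 (h2 h5)
                  · exact h6.2 (h1 h5)
            obtain ⟨Z, hZsub, hZ⟩ := G.exists_cycle_symmDiff hA' hB' hne'
            have hZA : Z = A := G.cycle_subset_cycle hA hZ (hZsub.trans hΔsub)
            have : e ∈ symmDiff A' B' := hZsub (hZA ▸ heA)
            exact heAB (symmDiff_subset_union' this)
          · have hss : A ∪ B' ⊂ A ∪ B := by
              refine Finset.ssubset_iff_subset_ne.2 ⟨?_, hpb⟩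
              exact Finset.union_subset Finset.subset_union_left (hB'Y.trans hYAB)
            have hle : (A ∪ B').card ≤ n := by
              have := Finset.card_lt_card hss
              omega
            obtain ⟨X, hX1, hX2, hX3⟩ := IH hle hA hB' hB'A.symm heA
            exact ⟨X, hX1, hX2.trans hss.1, hX3⟩
        · have hss : A ∪ A' ⊂ A ∪ B := by
            refine Finset.ssubset_iff_subset_ne.2 ⟨?_, hpa⟩
            exact Finset.union_subset Finset.subset_union_left (hA'Y.trans hYAB)
          have hle : (A ∪ A').card ≤ n := by
            have := Finset.card_lt_card hss
            omega
          obtain ⟨X, hX1, hX2, hX3⟩ := IH hle hA hA' hA'A.symm heA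
          exact ⟨X, hX1, hX2.trans hss.1, hX3⟩

/-- Three distinct cycles exist when there are two distinct lift circuits. -/
lemma three_cycles (G : MGraph V α) (h2 : G.TwoLiftCircuits) :
    ∃ D₁ D₂ D₃, G.IsCycle D₁ ∧ G.IsCycle D₂ ∧ G.IsCycle D₃ ∧ D₁ ≠ D₂ ∧ D₁ ≠ D₃ ∧ D₂ ≠ D₃ := by
  obtain ⟨X₁, X₂, hX₁, hX₂, hX12⟩ := h2
  obtain ⟨A₁, B₁, hA₁, hB₁, hne₁, _, _, hU₁⟩ := G.liftCircuit_structure hX₁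
  obtain ⟨A₂, B₂, hA₂, hB₂, hne₂, _, _, hU₂⟩ := G.liftCircuit_structure hX₂
  by_cases h : A₂ = A₁ ∨ A₂ = B₁
  · by_cases h' : B₂ = A₁ ∨ B₂ = B₁
    · exfalso
      apply hX12
      rw [hU₁, hU₂]
      rcases h with rfl | rfl <;> rcases h' with rfl | rfl
      · exact absurd rfl hne₂
      · rfl
      · exact Finset.union_comm _ _
      · exact absurd rfl hne₂
    · push_neg at h'
      exact ⟨A₁, B₁, B₂, hA₁, hB₁, hB₂, hne₁, fun hh => h'.1 hh.symm, fun hh => h'.2 hh.symm⟩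
  · push_neg at h
    exact ⟨A₁, B₁, A₂, hA₁, hB₁, hA₂, hne₁, fun hh => h.1 hh.symm, fun hh => h.2 hh.symm⟩

lemma liftSeries_imp_aux (G : MGraph V α) (h2 : G.TwoLiftCircuits) {e f : α}
    (hls : ∀ X, G.LiftCircuit X → e ∈ X → f ∈ X) {C : Finset α}
    (hC : G.IsCycle C) (heC : e ∈ C) : f ∈ C := by
  by_contra hfC
  by_cases hcase : ∃ D, G.IsCycle D ∧ D ≠ C ∧ f ∉ D
  · obtain ⟨D, hD, hDC, hfD⟩ := hcase
    obtain ⟨X, hX, hXsub, heX⟩ :=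
      G.exists_liftCircuit_mem (C ∪ D).card le_rfl hC hD (fun hh => hDC hh.symm) heC
    have := hls X hX heX
    rcases Finset.mem_union.1 (hXsub this) with h3 | h3
    exacts [hfC h3, hfD h3]
  · push_neg at hcase
    have hb : ∀ D, G.IsCycle D → D ≠ C → f ∈ D := fun D hD hDC => hcase D hD hDC
    -- key sublemma : for distinct cycles both containing f, C ⊆ their symmetric difference
    have hkey : ∀ Z₁ Z₂, G.IsCycle Z₁ → G.IsCycle Z₂ → Z₁ ≠ Z₂ → f ∈ Z₁ → f ∈ Z₂ →
        C ⊆ symmDiff Z₁ Z₂ := by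
      intro Z₁ Z₂ h1 h2' hne hf1 hf2
      obtain ⟨Z, hZsub, hZ⟩ := G.exists_cycle_symmDiff h1 h2' hne
      have hfΔ : f ∉ symmDiff Z₁ Z₂ := by
        intro hh
        rcases Finset.mem_symmDiff.1 hh with h3 | h3
        exacts [h3.2 hf2, h3.2 hf1]
      have hZC : Z = C := by
        by_contra hZC
        exact hfΔ (hZsub (hb Z hZ hZC))
      exact hZC ▸ hZsub
    -- there are exactly two cycles other than C
    obtain ⟨D₁, D₂, D₃, hD₁, hD₂, hD₃, h12, h13, h23⟩ := G.three_cycles h2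
    obtain ⟨E₁, E₂, hE₁, hE₂, hEne, hE₁C, hE₂C⟩ :
        ∃ E₁ E₂, G.IsCycle E₁ ∧ G.IsCycle E₂ ∧ E₁ ≠ E₂ ∧ E₁ ≠ C ∧ E₂ ≠ C := by
      by_cases hc1 : D₁ = C
      · exact ⟨D₂, D₃, hD₂, hD₃, h23, fun hh => h12 (hh ▸ hc1.symm).symm,
          fun hh => h13 (hh ▸ hc1.symm).symm⟩
      · by_cases hc2 : D₂ = C
        · exact ⟨D₁, D₃, hD₁, hD₃, h13, hc1, fun hh => h23 (hh ▸ hc2.symm).symm⟩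
        · exact ⟨D₁, D₂, hD₁, hD₂, h12, hc1, hc2⟩
    have hfE₁ : f ∈ E₁ := hb E₁ hE₁ hE₁C
    have hfE₂ : f ∈ E₂ := hb E₂ hE₂ hE₂C
    -- every cycle is C, E₁ or E₂
    have hall : ∀ Z, G.IsCycle Z → Z = C ∨ Z = E₁ ∨ Z = E₂ := by
      intro Z hZ
      by_contra hh
      push_neg at hh
      obtain ⟨hZC, hZ1, hZ2⟩ := hh
      have hfZ : f ∈ Z := hb Z hZ hZC
      have p12 := Finset.mem_symmDiff.1 (hkey E₁ E₂ hE₁ hE₂ hEne hfE₁ hfE₂ heC)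
      have p1Z := Finset.mem_symmDiff.1 (hkey E₁ Z hE₁ hZ (fun hh => hZ1 hh.symm) hfE₁ hfZ heC)
      have p2Z := Finset.mem_symmDiff.1 (hkey E₂ Z hE₂ hZ (fun hh => hZ2 hh.symm) hfE₂ hfZ heC)
      tauto
    -- C equals the symmetric difference of E₁ and E₂
    have hCsub : C ⊆ symmDiff E₁ E₂ := hkey E₁ E₂ hE₁ hE₂ hEne hfE₁ hfE₂
    have hCeq : C = symmDiff E₁ E₂ := by
      by_contra hne2
      have hTne : (symmDiff (symmDiff E₁ E₂) C).Nonempty :=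
        finset_symmDiff_nonempty (fun hh => hne2 hh.symm)
      have hTE : symmDiff (symmDiff E₁ E₂) C ⊆ G.E := by
        intro t ht
        rcases Finset.mem_union.1 (symmDiff_subset_union' ht) with h3 | h3
        · rcases Finset.mem_union.1 (symmDiff_subset_union' h3) with h4 | h4
          exacts [hE₁.2.1 h4, hE₂.2.1 h4]
        · exact hC.2.1 h3
      have hTeven : ∀ x, Even (G.degIn (symmDiff (symmDiff E₁ E₂) C) x) := by
        intro x
        exact G.degIn_symmDiff_even x
          (G.degIn_symmDiff_even x (G.cycle_even hE₁ x) (G.cycle_even hE₂ x))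
          (G.cycle_even hC x)
      obtain ⟨Z', hZ'sub, hZ'⟩ := G.exists_cycle_of_even hTE hTne hTeven
      have hfT : f ∉ symmDiff (symmDiff E₁ E₂) C := by
        intro hh
        rcases Finset.mem_symmDiff.1 hh with h3 | h3
        · rcases Finset.mem_symmDiff.1 h3.1 with h4 | h4
          exacts [h4.2 hfE₂, h4.2 hfE₁]
        · exact hfC h3.1
      have hZ'C : Z' ≠ C := by
        intro hh
        subst hh
        have := hZ'sub heC
        rcases Finset.mem_symmDiff.1 this with h3 | h3
        · exact h3.2 heC
        · exact h3.2 (hCsub heC)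
      exact hfT (hZ'sub (hb Z' hZ' hZ'C))
    -- every lift circuit equals C ∪ E₁ ∪ E₂, contradicting the existence of two
    have hE₂eq : E₂ = symmDiff E₁ C := by rw [hCeq, symmDiff_symmDiff_cancel_left]
    have hE₁eq : E₁ = symmDiff E₂ C := by
      rw [hCeq, symmDiff_comm E₁ E₂, symmDiff_symmDiff_cancel_left]
    have hcirc : ∀ X, G.LiftCircuit X → X = C ∪ E₁ ∪ E₂ := by
      intro X hX
      obtain ⟨A, B, hA, hB, hABne, hAX, hBX, hXU⟩ := G.liftCircuit_structure hX
      have hCsubU : ∀ P Q : Finset α, (P = C ∧ Q = E₁ ∨ P = C ∧ Q = E₂ ∨ P = E₁ ∧ Q = E₂) →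
          C ∪ E₁ ∪ E₂ ⊆ P ∪ Q := by
        rintro P Q (⟨rfl, rfl⟩ | ⟨rfl, rfl⟩ | ⟨rfl, rfl⟩)
        · refine Finset.union_subset (Finset.union_subset Finset.subset_union_left
            Finset.subset_union_right) ?_
          rw [hE₂eq]
          exact symmDiff_subset_union'.trans (by rw [Finset.union_comm])
        · refine Finset.union_subset (Finset.union_subset Finset.subset_union_left ?_)
            Finset.subset_union_right
          rw [hE₁eq]
          exact symmDiff_subset_union'.trans (by rw [Finset.union_comm])
        · refine Finset.union_subset (Finset.union_subset ?_ Finset.subset_union_left)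
            Finset.subset_union_right
          rw [hCeq]
          exact symmDiff_subset_union'
      have hsub1 : X ⊆ C ∪ E₁ ∪ E₂ := by
        rw [hXU]
        have hmem : ∀ P, G.IsCycle P → P ⊆ C ∪ E₁ ∪ E₂ := by
          intro P hP
          rcases hall P hP with rfl | rfl | rfl
          · exact fun t ht => Finset.mem_union_left _ (Finset.mem_union_left _ ht)
          · exact fun t ht => Finset.mem_union_left _ (Finset.mem_union_right _ ht)
          · exact fun t ht => Finset.mem_union_right _ ht
        exact Finset.union_subset (hmem A hA) (hmem B hB)
      have hsub2 : C ∪ E₁ ∪ E₂ ⊆ X := by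
        rw [hXU]
        rcases hall A hA with rfl | rfl | rfl <;> rcases hall B hB with rfl | rfl | rfl
        · exact absurd rfl hABne
        · exact hCsubU _ _ (Or.inl ⟨rfl, rfl⟩)
        · exact hCsubU _ _ (Or.inr (Or.inl ⟨rfl, rfl⟩))
        · exact (hCsubU _ _ (Or.inl ⟨rfl, rfl⟩)).trans (by rw [Finset.union_comm])
        · exact absurd rfl hABne
        · exact hCsubU _ _ (Or.inr (Or.inr ⟨rfl, rfl⟩))
        · exact (hCsubU _ _ (Or.inr (Or.inl ⟨rfl, rfl⟩))).trans
            (by rw [Finset.union_comm])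
        · exact (hCsubU _ _ (Or.inr (Or.inr ⟨rfl, rfl⟩))).trans
            (by rw [Finset.union_comm])
        · exact absurd rfl hABne
      exact Finset.Subset.antisymm hsub1 hsub2
    obtain ⟨X₁, X₂, hX₁, hX₂, hX12⟩ := h2
    exact hX12 ((hcirc X₁ hX₁).trans (hcirc X₂ hX₂).symm)

/-- lift-series pairs are graph-series pairs. -/
lemma liftSeries_seriesPair (G : MGraph V α) (h2 : G.TwoLiftCircuits) {e f : α}
    (heE : e ∈ G.E) (hfE : f ∈ G.E)
    (hls : ∀ X, G.LiftCircuit X → (e ∈ X ↔ f ∈ X)) : G.SeriesPair e f :=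
  ⟨heE, hfE, fun C hC =>
    ⟨fun h => G.liftSeries_imp_aux h2 (fun X hX hh => (hls X hX).1 hh) hC h,
     fun h => G.liftSeries_imp_aux h2 (fun X hX hh => (hls X hX).2 hh) hC h⟩⟩

lemma seriesPair_refl (G : MGraph V α) {e : α} (he : e ∈ G.E) : G.SeriesPair e e :=
  ⟨he, he, fun _ _ => Iff.rfl⟩

lemma seriesPair_symm (G : MGraph V α) {e f : α} (h : G.SeriesPair e f) : G.SeriesPair f e :=
  ⟨h.2.1, h.1, fun C hC => (h.2.2 C hC).symm⟩

lemma seriesPair_trans (G : MGraph V α) {e f g : α} (h1 : G.SeriesPair e f)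
    (h2 : G.SeriesPair f g) : G.SeriesPair e g :=
  ⟨h1.1, h2.2.1, fun C hC => (h1.2.2 C hC).trans (h2.2.2 C hC)⟩

/-- The series class of an edge. -/
noncomputable def seriesClassOf (G : MGraph V α) (e : α) : Finset α :=
  @Finset.filter _ (G.SeriesPair e) (Classical.decPred _) G.E

lemma mem_seriesClassOf (G : MGraph V α) {e g : α} :
    g ∈ G.seriesClassOf e ↔ g ∈ G.E ∧ G.SeriesPair e g := by
  unfold seriesClassOf
  exact @Finset.mem_filter _ _ (Classical.decPred _) _ _

lemma seriesClassOf_isClass (G : MGraph V α) {e : α} (he : e ∈ G.E) :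
    G.SeriesClass (G.seriesClassOf e) := by
  refine ⟨fun g hg => (G.mem_seriesClassOf.1 hg).1,
    ⟨e, G.mem_seriesClassOf.2 ⟨he, G.seriesPair_refl he⟩⟩, ?_, ?_⟩
  · intro a ha b hb
    exact G.seriesPair_trans (G.seriesPair_symm (G.mem_seriesClassOf.1 ha).2)
      (G.mem_seriesClassOf.1 hb).2
  · intro g hg hall
    refine G.mem_seriesClassOf.2 ⟨hg, ?_⟩
    exact hall e (G.mem_seriesClassOf.2 ⟨he, G.seriesPair_refl he⟩)

/-- A cycle meeting an ear contains it. -/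
lemma ear_subset_cycle (G : MGraph V α) {P C : Finset α} (hP : G.IsEar P)
    (hC : G.IsCycle C) {a : α} (haP : a ∈ P) (haC : a ∈ C) : P ⊆ C := by
  by_contra hsub
  have hpath := hP.1
  have h1 : P ∩ C ⊆ P := Finset.inter_subset_left
  have hne : (P ∩ C).Nonempty := ⟨a, Finset.mem_inter.2 ⟨haP, haC⟩⟩
  have hne2 : (P \ (P ∩ C)).Nonempty := by
    rw [Finset.sdiff_nonempty]
    intro h2
    exact hsub (fun t ht => (Finset.mem_inter.1 (h2 ht)).2)
  obtain ⟨w, g, hw, hgP, hgnPC, hwg⟩ := G.exists_boundary h1 hne hne2 hpath.2.2.2.2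
  have hgC : g ∉ C := fun hh => hgnPC (Finset.mem_inter.2 ⟨hgP, hh⟩)
  obtain ⟨h, hhPC, hwh⟩ := hw
  have hhP : h ∈ P := (Finset.mem_inter.1 hhPC).1
  have hhC : h ∈ C := (Finset.mem_inter.1 hhPC).2
  have hhg : h ≠ g := fun hh => hgC (hh ▸ hhC)
  have hnlP := G.path_no_loops hpath
  have hch : G.cdeg h w = 1 := G.cdeg_eq_one hwh (hnlP h hhP)
  have hcg : G.cdeg g w = 1 := G.cdeg_eq_one hwg (hnlP g hgP)
  have hpairP : {h, g} ⊆ P := by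
    intro t ht
    rcases Finset.mem_insert.1 ht with rfl | ht
    · exact hhP
    · rw [Finset.mem_singleton.1 ht]; exact hgP
  have hdeghg : G.degIn {h, g} w = 2 := by
    rw [degIn_eq_sum, Finset.sum_insert (by simpa using hhg), Finset.sum_singleton, hch, hcg]
  have hsplitP := G.degIn_add_sdiff hpairP w
  have hdegPle : G.degIn P w ≤ 2 := hpath.2.2.2.1 w ⟨h, hhP, hwh⟩
  have hdegP : G.degIn P w = 2 := by omega
  have hrest : G.degIn (P \ {h, g}) w = 0 := by omega
  have hdegE : G.degIn G.E w = 2 := hP.2.1 w hdegP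
  have hsplitE := G.degIn_add_sdiff hpath.2.1 w
  have hrestE : G.degIn (G.E \ P) w = 0 := by omega
  have hdegC : G.degIn C w = 2 := hC.2.2.1 w ⟨h, hhC, hwh⟩
  have hCle : G.degIn C w ≤ 1 := by
    have hCsplit := G.degIn_add_sdiff (Finset.singleton_subset_iff.2 hhC) w
    have h1' : G.degIn {h} w = 1 := by rw [degIn_eq_sum, Finset.sum_singleton, hch]
    have h0 : G.degIn (C \ {h}) w = 0 := by
      rw [degIn_eq_zero_iff]
      intro z hz hwz
      rw [Finset.mem_sdiff, Finset.mem_singleton] at hz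
      have hzE : z ∈ G.E := hC.2.1 hz.1
      have hzP : z ∈ P := by
        by_contra hzP
        exact (G.degIn_eq_zero_iff _ w).1 hrestE z (Finset.mem_sdiff.2 ⟨hzE, hzP⟩) hwz
      have hzg : z ≠ g := fun hh => hgC (hh ▸ hz.1)
      have hzm : z ∈ P \ {h, g} := Finset.mem_sdiff.2 ⟨hzP, by simp [hz.2, hzg]⟩
      exact (G.degIn_eq_zero_iff _ w).1 hrest z hzm hwz
    omega
  omega

lemma ear_seriesPair (G : MGraph V α) {P : Finset α} (hP : G.IsEar P) {a b : α}
    (ha : a ∈ P) (hb : b ∈ P) : G.SeriesPair a b := by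
  refine ⟨hP.1.2.1 ha, hP.1.2.1 hb, fun C hC => ⟨?_, ?_⟩⟩
  · intro h; exact G.ear_subset_cycle hP hC ha h hb
  · intro h; exact G.ear_subset_cycle hP hC hb h ha

lemma ear_eq_seriesClassOf (G : MGraph V α)
    (hser : ∀ X, G.SeriesClass X → G.IsEar X) {P : Finset α} (hP : G.IsEar P)
    {e₀ : α} (he₀ : e₀ ∈ P) : P = G.seriesClassOf e₀ := by
  have he₀E : e₀ ∈ G.E := hP.1.2.1 he₀
  have hPS : P ⊆ G.seriesClassOf e₀ := fun g hg =>
    G.mem_seriesClassOf.2 ⟨hP.1.2.1 hg, G.ear_seriesPair hP he₀ hg⟩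
  have hSear := hser _ (G.seriesClassOf_isClass he₀E)
  by_contra hne
  have hSP : ((G.seriesClassOf e₀) \ P).Nonempty := by
    rw [Finset.sdiff_nonempty]
    intro h2
    exact hne (Finset.Subset.antisymm hPS h2)
  obtain ⟨w, g, hw, hgS, hgP, hwg⟩ := G.exists_boundary hPS hP.1.1 hSP hSear.1.2.2.2.2
  have hdegS_le : G.degIn (G.seriesClassOf e₀) w ≤ 2 :=
    hSear.1.2.2.2.1 w (G.vin_mono hPS hw)
  have h1 : 1 ≤ G.degIn P w := G.degIn_pos_of_vin hw
  have hsplit := G.degIn_add_sdiff hPS w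
  have hg' : 1 ≤ G.degIn ((G.seriesClassOf e₀) \ P) w :=
    G.degIn_pos_of_vin ⟨g, Finset.mem_sdiff.2 ⟨hgS, hgP⟩, hwg⟩
  have hdegP1 : G.degIn P w = 1 := by omega
  have hdegS2 : G.degIn (G.seriesClassOf e₀) w = 2 := by omega
  have hE3 := hP.2.2.1 w hdegP1
  have hE2 := hSear.2.1 w hdegS2
  omega

lemma liftEq_symm (G₁ : MGraph V₁ α) (G₂ : MGraph V₂ α) (h : G₁.LiftEq G₂) : G₂.LiftEq G₁ :=
  ⟨h.1.symm, fun X => (h.2 X).symm⟩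

lemma twoLiftCircuits_transfer (G₁ : MGraph V₁ α) (G₂ : MGraph V₂ α) (hL : G₁.LiftEq G₂)
    (h2 : G₁.TwoLiftCircuits) : G₂.TwoLiftCircuits := by
  obtain ⟨X, Y, hX, hY, hXY⟩ := h2
  exact ⟨X, Y, (hL.2 X).1 hX, (hL.2 Y).1 hY, hXY⟩

lemma ear_transfer (G₁ : MGraph V₁ α) (G₂ : MGraph V₂ α)
    (hL : G₁.LiftEq G₂) (h2 : G₁.TwoLiftCircuits)
    (hser₁ : ∀ X : Finset α, G₁.SeriesClass X → G₁.IsEar X)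
    (hser₂ : ∀ X : Finset α, G₂.SeriesClass X → G₂.IsEar X)
    {P : Finset α} (hP : G₁.IsEar P) : G₂.IsEar P := by
  obtain ⟨e₀, he₀⟩ := hP.1.1
  have h2' : G₂.TwoLiftCircuits := twoLiftCircuits_transfer G₁ G₂ hL h2
  have htrans : ∀ a b : α, G₁.SeriesPair a b ↔ G₂.SeriesPair a b := by
    intro a b
    constructor
    · intro h
      exact G₂.liftSeries_seriesPair h2' (hL.1 ▸ h.1) (hL.1 ▸ h.2.1)
        (fun X hX => G₁.seriesPair_liftSeries h X ((hL.2 X).2 hX))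
    · intro h
      exact G₁.liftSeries_seriesPair h2 (hL.1.symm ▸ h.1) (hL.1.symm ▸ h.2.1)
        (fun X hX => G₂.seriesPair_liftSeries h X ((hL.2 X).1 hX))
  have hSC : G₁.seriesClassOf e₀ = G₂.seriesClassOf e₀ := by
    ext g
    rw [G₁.mem_seriesClassOf, G₂.mem_seriesClassOf, hL.1, htrans e₀ g]
  have hPeq : P = G₂.seriesClassOf e₀ := by
    rw [G₁.ear_eq_seriesClassOf hser₁ hP he₀, hSC]
  have he₀E₂ : e₀ ∈ G₂.E := hL.1 ▸ hP.1.2.1 he₀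
  rw [hPeq]
  exact hser₂ _ (G₂.seriesClassOf_isClass he₀E₂)

end MGraph

/-- under `L(G₁) = L(G₂)` with at least two circuits, for connected
2-edge-connected graphs whose series classes are ears, the ears of `G₁` and `G₂`
have the same edge sets. -/
theorem ear_iff_ear_of_liftEq
    {V₁ V₂ α : Type} [DecidableEq V₁] [DecidableEq V₂] [DecidableEq α]
    (G₁ : MGraph V₁ α) (G₂ : MGraph V₂ α)
    (hc₁ : G₁.Connected) (hc₂ : G₂.Connected)
    (h2ec₁ : G₁.TwoEdgeConnected) (h2ec₂ : G₂.TwoEdgeConnected)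
    (hL : G₁.LiftEq G₂) (h2 : G₁.TwoLiftCircuits)
    (hser₁ : ∀ X : Finset α, G₁.SeriesClass X → G₁.IsEar X)
    (hser₂ : ∀ X : Finset α, G₂.SeriesClass X → G₂.IsEar X) :
    ∀ P : Finset α, G₁.IsEar P ↔ G₂.IsEar P := by
  intro P
  constructor
  · exact fun h => MGraph.ear_transfer G₁ G₂ hL h2 hser₁ hser₂ h
  · exact fun h => MGraph.ear_transfer G₂ G₁ (MGraph.liftEq_symm G₁ G₂ hL)
      (MGraph.twoLiftCircuits_transfer G₁ G₂ hL h2) hser₂ hser₁ h
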